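/- Let α_1 < ... < α_n be reals, n ≥ 2, and let i* be the unique index such that α_{i*} ≤ (α_1 + α_n)/2 < α_{i*+1} (with i* < n). Then the bipartition S = {v_1,...,v_{i*}}, S̄ = {v_{i*+1},...,v_n} minimizes max{range(S), range(S̄)} over all bipartitions of V into two nonempty sets. -/

import Mathlib

open Finset

noncomputable def rng {n : ℕ} (α : Fin n → ℝ) (S : Finset (Fin n)) : ℝ :=
  if h : S.Nonempty then S.sup' h α - S.inf' h α else 0

lemma rng_ge {n : ℕ} (α : Fin n → ℝ) {T : Finset (Fin n)} {a b : Fin n}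
    (ha : a ∈ T) (hb : b ∈ T) : α a - α b ≤ rng α T := by
  have hT : T.Nonempty := ⟨a, ha⟩
  rw [rng, dif_pos hT]
  exact sub_le_sub (Finset.le_sup' α ha) (Finset.inf'_le α hb)

lemma helper {n : ℕ} (hn : 2 ≤ n) (α : Fin n → ℝ) (hα : StrictMono α)
    (i : ℕ) (hi : i + 1 < n)
    (hle : α ⟨i, Nat.lt_of_succ_lt hi⟩ ≤ (α ⟨0, Nat.zero_lt_of_lt hi⟩ + α ⟨n - 1, Nat.sub_lt (Nat.zero_lt_of_lt hi) Nat.one_pos⟩) / 2)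
    (hlt : (α ⟨0, Nat.zero_lt_of_lt hi⟩ + α ⟨n - 1, Nat.sub_lt (Nat.zero_lt_of_lt hi) Nat.one_pos⟩) / 2 < α ⟨i + 1, hi⟩)
    (T : Finset (Fin n)) (haT : (⟨0, Nat.zero_lt_of_lt hi⟩ : Fin n) ∈ T) :
    max (α ⟨i, Nat.lt_of_succ_lt hi⟩ - α ⟨0, Nat.zero_lt_of_lt hi⟩)
        (α ⟨n - 1, Nat.sub_lt (Nat.zero_lt_of_lt hi) Nat.one_pos⟩ - α ⟨i + 1, hi⟩) ≤ max (rng α T) (rng α Tᶜ) := by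
  set a : Fin n := ⟨0, by omega⟩
  set b : Fin n := ⟨n - 1, by omega⟩
  set vi : Fin n := ⟨i, by omega⟩
  set vI : Fin n := ⟨i + 1, hi⟩
  have hab : α vi < α vI := hα (by simp [vi, vI, Fin.lt_def])
  by_cases h1 : ∃ k ∈ T, i + 1 ≤ k.val
  · obtain ⟨k, hk, hk2⟩ := h1
    have h3 : α vI ≤ α k := hα.monotone (by simpa [vI, Fin.le_def] using hk2)
    have h4 : α k - α a ≤ rng α T := rng_ge α hk haT
    refine le_trans ?_ (le_max_left _ _)
    refine max_le (by linarith) (by linarith)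
  · push_neg at h1
    have hbT : b ∈ Tᶜ := by
      simp only [Finset.mem_compl]
      intro hb
      exact absurd (by omega : i + 1 ≤ n - 1) (by have := h1 b hb; simp [b] at this; omega)
    by_cases h2 : ∃ k ∈ Tᶜ, k.val ≤ i
    · obtain ⟨k, hk, hk2⟩ := h2
      have h3 : α k ≤ α vi := hα.monotone (by simpa [vi, Fin.le_def] using hk2)
      have h4 : α b - α k ≤ rng α Tᶜ := rng_ge α hbT hk
      refine le_trans ?_ (le_max_right _ _)
      refine max_le (by linarith) (by linarith)
    · push_neg at h2
      have hviT : vi ∈ T := by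
        by_contra h
        exact absurd (le_refl i) (by have := h2 vi (Finset.mem_compl.mpr h); simp [vi] at this)
      have hvIT : vI ∈ Tᶜ := Finset.mem_compl.mpr (fun h => by
        have := h1 vI h; simp [vI] at this)
      have h4 : α vi - α a ≤ rng α T := rng_ge α hviT haT
      have h5 : α b - α vI ≤ rng α Tᶜ := rng_ge α hbT hvIT
      exact max_le_max h4 h5

/-- If `i*` is the index with `α_{i*} ≤ (α₁+αₙ)/2 < α_{i*+1}` (0-based `i` here),
then the prefix split at `i*` minimizes `max{range(S), range(S̄)}` over bipartitions. -/
theorem stmt5 (n : ℕ) (hn : 2 ≤ n) (α : Fin n → ℝ) (hα : StrictMono α)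
    (i : ℕ) (hi : i + 1 < n)
    (hle : α ⟨i, by omega⟩ ≤ (α ⟨0, by omega⟩ + α ⟨n - 1, by omega⟩) / 2)
    (hlt : (α ⟨0, by omega⟩ + α ⟨n - 1, by omega⟩) / 2 < α ⟨i + 1, hi⟩) :
    ∀ T : Finset (Fin n), T.Nonempty → Tᶜ.Nonempty →
      max (rng α (univ.filter (fun v : Fin n => v.val ≤ i)))
          (rng α (univ.filter (fun v : Fin n => v.val ≤ i))ᶜ) ≤
        max (rng α T) (rng α Tᶜ) := by
  intro T hT hTc
  set a : Fin n := ⟨0, by omega⟩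
  set b : Fin n := ⟨n - 1, by omega⟩
  set vi : Fin n := ⟨i, by omega⟩
  set vI : Fin n := ⟨i + 1, hi⟩
  set S : Finset (Fin n) := univ.filter (fun v : Fin n => v.val ≤ i) with hS
  have hSne : S.Nonempty := ⟨a, by simp [S, a]⟩
  have hScne : Sᶜ.Nonempty := ⟨b, by simp [S, b]; omega⟩
  -- LHS ≤ M
  have hrS : rng α S ≤ α vi - α a := by
    rw [rng, dif_pos hSne]
    refine sub_le_sub ?_ ?_
    · refine Finset.sup'_le _ _ fun k hk => hα.monotone ?_
      simp only [S, Finset.mem_filter] at hk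
      simpa [vi, Fin.le_def] using hk.2
    · refine Finset.le_inf' _ _ fun k hk => hα.monotone ?_
      simp [a, Fin.le_def]
  have hrSc : rng α Sᶜ ≤ α b - α vI := by
    rw [rng, dif_pos hScne]
    refine sub_le_sub ?_ ?_
    · refine Finset.sup'_le _ _ fun k hk => hα.monotone ?_
      simp [b, Fin.le_def]; omega
    · refine Finset.le_inf' _ _ fun k hk => hα.monotone ?_
      simp only [S, Finset.mem_compl, Finset.mem_filter, Finset.mem_univ,
        true_and, not_le] at hk
      simpa [vI, Fin.le_def] using hk
  refine le_trans (max_le_max hrS hrSc) ?_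
  by_cases haT : a ∈ T
  · exact helper hn α hα i hi hle hlt T haT
  · have := helper hn α hα i hi hle hlt Tᶜ (Finset.mem_compl.mpr haT)
    rw [compl_compl] at this
    simpa [max_comm (rng α Tᶜ)] using this
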